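/- arXiv:2210.06248 — 3 statements merged into one kernel-verified Lean document; each statement's English description precedes it below -/
import Mathlib

section
/- Let Γ be a lattice in ℝⁿ (the ℤ-span of a basis of ℝⁿ) and let T be an orthogonal transformation such that Γ ∩ TΓ has finite index in Γ. Then the matrix of T with respect to a lattice basis of Γ has all entries rational. -/
noncomputable section

abbrev En (n : ℕ) := EuclideanSpace ℝ (Fin n)

/-- The lattice generated by a basis: all integer linear combinations. -/
def lattB {n : ℕ} (b : Module.Basis (Fin n) ℝ (En n)) : AddSubgroup (En n) :=
  (Submodule.span ℤ (Set.range ⇑b)).toAddSubgroup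

/-- `T` is a coincidence isometry of `Γ`: `Γ ∩ TΓ` has finite index in `Γ`. -/
def CI {n : ℕ} (Γ : AddSubgroup (En n)) (T : En n ≃ₗᵢ[ℝ] En n) : Prop :=
  (Γ ⊓ Γ.map T.toLinearEquiv.toLinearMap.toAddMonoidHom).relIndex Γ ≠ 0

lemma ratRepr {n : ℕ} (b : Module.Basis (Fin n) ℝ (En n)) {x : En n}
    (hx : x ∈ Submodule.span ℚ (Set.range ⇑b)) :
    ∀ i, ∃ q : ℚ, b.repr x i = (q : ℝ) := by
  induction hx using Submodule.span_induction with
  | mem y hy =>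
    obtain ⟨k, rfl⟩ := hy
    intro i
    by_cases h : k = i
    · exact ⟨1, by simp [h]⟩
    · exact ⟨0, by simp [Module.Basis.repr_self, Finsupp.single_eq_of_ne' h]⟩
  | zero => exact fun i => ⟨0, by simp⟩
  | add y z _ _ hy hz =>
    intro i
    obtain ⟨q1, h1⟩ := hy i
    obtain ⟨q2, h2⟩ := hz i
    exact ⟨q1 + q2, by simp [h1, h2]⟩
  | smul q y _ hy =>
    intro i
    obtain ⟨q1, h1⟩ := hy i
    refine ⟨q * q1, ?_⟩
    rw [← algebraMap_smul ℝ q y, map_smul]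
    simp [h1]

theorem stmt_0 {n : ℕ} (b : Module.Basis (Fin n) ℝ (En n)) (T : En n ≃ₗᵢ[ℝ] En n)
    (hT : CI (lattB b) T) :
    ∀ i j, ∃ q : ℚ, b.repr (T (b j)) i = (q : ℝ) := by
  set V : Submodule ℚ (En n) := Submodule.span ℚ (Set.range ⇑b) with hV
  have hΓV : ∀ x ∈ lattB b, x ∈ V := by
    intro x hx
    exact Submodule.span_subset_span ℤ ℚ _ hx
  have hbV : ∀ k, (b k : En n) ∈ V := fun k =>
    Submodule.subset_span ⟨k, rfl⟩
  have hbΓ : ∀ k, (b k : En n) ∈ lattB b := fun k =>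
    Submodule.subset_span ⟨k, rfl⟩
  -- the ℚ-linear map T⁻¹
  set g : En n →ₗ[ℚ] En n :=
    (T.symm.toLinearEquiv.toLinearMap).restrictScalars ℚ with hg
  have hgV : ∀ x ∈ V, g x ∈ V := by
    have : V ≤ V.comap g := by
      rw [hV]
      rw [Submodule.span_le]
      rintro y ⟨k, rfl⟩
      -- m • b k ∈ Γ ⊓ TΓ for some m > 0
      obtain ⟨m, hm0, -, hmem⟩ :=
        AddSubgroup.exists_nsmul_mem_of_relIndex_ne_zero hT (hbΓ k)
      rw [AddSubgroup.mem_inf, AddSubgroup.mem_inf] at hmem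
      obtain ⟨⟨-, hmem2⟩, -⟩ := hmem
      obtain ⟨x, hxΓ, hx⟩ := hmem2
      -- T x = m • b k, so T.symm (b k) = (m:ℚ)⁻¹ • x
      have hTsymm : m • T.symm (b k) = x := by
        have := congrArg T.symm hx
        simpa using this.symm
      have : T.symm (b k) = (m : ℚ)⁻¹ • x := by
        have hmQ : (m : ℚ) ≠ 0 := Nat.cast_ne_zero.mpr hm0.ne'
        rw [← hTsymm]
        rw [← Nat.cast_smul_eq_nsmul ℚ m (T.symm (b k)), smul_smul,
          inv_mul_cancel₀ hmQ, one_smul]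
      simp only [SetLike.mem_coe, Submodule.mem_comap]
      show T.symm (b k) ∈ Submodule.span ℚ (Set.range ⇑b)
      rw [this]
      exact V.smul_mem _ (hΓV x hxΓ)
    intro x hx
    exact this hx
  haveI : FiniteDimensional ℚ V :=
    FiniteDimensional.span_of_finite ℚ (Set.finite_range ⇑b)
  set f : V →ₗ[ℚ] V := g.restrict hgV with hf
  have hfinj : Function.Injective f := by
    intro x y hxy
    have : g x = g y := congrArg Subtype.val hxy
    have h2 : T.symm (x : En n) = T.symm (y : En n) := this
    exact Subtype.ext (T.symm.injective h2)
  have hfsurj : Function.Surjective f := (LinearMap.injective_iff_surjective).mp hfinj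
  intro i j
  obtain ⟨y, hy⟩ := hfsurj ⟨b j, hbV j⟩
  have hy' : T.symm (y : En n) = b j := congrArg Subtype.val hy
  have hTbj : T (b j) = (y : En n) := by
    rw [← hy']; simp
  rw [hTbj]
  exact ratRepr b y.2 i
end
end

section
/- Let Γ be a lattice in ℝⁿ with basis {a₁,…,aₙ} and T an orthogonal transformation whose matrix with respect to this basis has all entries rational. Then Γ ∩ TΓ has finite index in Γ, i.e., T is a coincidence isometry of Γ. -/
noncomputable section

/-- Multiplying a rational by a multiple of its denominator gives an integer. -/
lemma den_dvd_int (q : ℚ) (d : ℕ) (hd : q.den ∣ d) : ∃ z : ℤ, (z : ℚ) = (d : ℚ) * q := by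
  obtain ⟨k, hk⟩ := hd
  refine ⟨k * q.num, ?_⟩
  push_cast
  rw [hk]
  push_cast
  rw [mul_comm (q.den : ℚ) (k : ℚ), mul_assoc, Rat.den_mul_eq_num]

theorem stmt_1 {n : ℕ} (b : Module.Basis (Fin n) ℝ (En n)) (T : En n ≃ₗᵢ[ℝ] En n)
    (hrat : ∀ i j, ∃ q : ℚ, b.repr (T (b j)) i = (q : ℝ)) :
    CI (lattB b) T := by
  classical
  choose M hM using hrat
  set φ : ℚ →+* ℝ := algebraMap ℚ ℝ with hφ
  set Tl : En n →ₗ[ℝ] En n := T.toLinearEquiv.toLinearMap with hTl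
  set Sl : En n →ₗ[ℝ] En n := T.symm.toLinearEquiv.toLinearMap with hSl
  set A : Matrix (Fin n) (Fin n) ℝ := LinearMap.toMatrix b b Tl with hA
  set S : Matrix (Fin n) (Fin n) ℝ := LinearMap.toMatrix b b Sl with hS
  have hMA : (Matrix.of M).map φ = A := by
    ext i j
    simp [hA, LinearMap.toMatrix_apply, Matrix.map_apply, ← hM i j, hTl, hφ]
  have hAS : A * S = 1 := by
    rw [hA, hS, ← LinearMap.toMatrix_comp b b b, ← LinearMap.toMatrix_id (M₁ := En n) b]
    congr 1
    ext x
    simp [hTl, hSl]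
  have hSA : S * A = 1 := by
    rw [hA, hS, ← LinearMap.toMatrix_comp b b b, ← LinearMap.toMatrix_id (M₁ := En n) b]
    congr 1
    ext x
    simp [hTl, hSl]
  -- the rational matrix is invertible
  have hdetA : IsUnit A.det := by
    refine IsUnit.of_mul_eq_one S.det ?_
    rw [← Matrix.det_mul, hAS, Matrix.det_one]
  have hdetM : (Matrix.of M).det ≠ 0 := by
    have hu : IsUnit (φ (Matrix.of M).det) := by
      rw [RingHom.map_det, RingHom.mapMatrix_apply, hMA]; exact hdetA
    intro h
    rw [h, map_zero] at hu
    exact hu.ne_zero rfl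
  set Mi : Matrix (Fin n) (Fin n) ℚ := (Matrix.of M)⁻¹ with hMi
  have hMiM : Mi * Matrix.of M = 1 := Matrix.nonsing_inv_mul _ (isUnit_iff_ne_zero.mpr hdetM)
  have hSMi : S = Mi.map φ := by
    have h1 : (Mi.map φ) * A = 1 := by
      rw [← hMA, ← Matrix.map_mul, hMiM]
      simp
    calc S = 1 * S := (one_mul S).symm
      _ = ((Mi.map φ) * A) * S := by rw [h1]
      _ = (Mi.map φ) * (A * S) := by rw [Matrix.mul_assoc]
      _ = Mi.map φ := by rw [hAS, mul_one]
  have hSrepr : ∀ i j, b.repr (T.symm (b j)) i = ((Mi i j : ℚ) : ℝ) := by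
    intro i j
    have := congrFun (congrFun hSMi i) j
    rw [hS, LinearMap.toMatrix_apply] at this
    simpa [hSl, hφ, Matrix.map_apply] using this
  -- common denominator
  set d : ℕ := ∏ i : Fin n, ∏ j : Fin n, (Mi i j).den with hd
  have hdpos : 0 < d := Finset.prod_pos fun i _ => Finset.prod_pos fun j _ => (Mi i j).pos
  have hden : ∀ i j : Fin n, (Mi i j).den ∣ d := by
    intro i j
    exact dvd_trans (Finset.dvd_prod_of_mem (fun j => (Mi i j).den) (Finset.mem_univ j))
      (Finset.dvd_prod_of_mem (fun i => ∏ j, (Mi i j).den) (Finset.mem_univ i))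
  choose W hW using fun i j => den_dvd_int (Mi i j) d (hden i j)
  -- key: T.symm (d • b j) is an integer combination of the basis
  have key : ∀ j, T.symm ((d : ℝ) • b j) = ∑ i, (W i j : ℝ) • b i := by
    intro j
    apply b.repr.injective
    ext i
    rw [map_smul, map_sum]
    have hrhs : (∑ k, b.repr ((W k j : ℝ) • b k)) i = (W i j : ℝ) := by
      rw [Finsupp.finset_sum_apply]
      simp [Finsupp.single_apply]
    rw [map_smul, Finsupp.smul_apply, hSrepr i j, hrhs]
    have : ((W i j : ℚ) : ℝ) = ((d : ℚ) : ℝ) * ((Mi i j : ℚ) : ℝ) := by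
      rw [← Rat.cast_mul, hW i j]
    push_cast at this ⊢
    rw [smul_eq_mul]
    linarith [this]
  -- membership facts
  set L : Submodule ℤ (En n) := Submodule.span ℤ (Set.range ⇑b) with hL
  have hxj : ∀ j, (∑ i, (W i j : ℝ) • b i) ∈ L := by
    intro j
    refine Submodule.sum_mem _ fun i _ => ?_
    rw [Int.cast_smul_eq_zsmul ℝ]
    exact Submodule.smul_mem _ _ (Submodule.subset_span ⟨i, rfl⟩)
  have hdbj : ∀ j, ((d : ℝ) • b j) ∈ (lattB b).map T.toLinearEquiv.toLinearMap.toAddMonoidHom := by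
    intro j
    refine ⟨∑ i, (W i j : ℝ) • b i, hxj j, ?_⟩
    have := congrArg T (key j)
    rw [LinearIsometryEquiv.apply_symm_apply] at this
    exact this.symm
  -- d • x ∈ Γ ∩ TΓ for all x ∈ Γ
  have hNsmul : ∀ x ∈ lattB b, d • x ∈
      (lattB b ⊓ (lattB b).map T.toLinearEquiv.toLinearMap.toAddMonoidHom) := by
    intro x hx
    refine ⟨AddSubgroup.nsmul_mem _ hx d, ?_⟩
    -- use submodule structure
    have hx' : x ∈ L := hx
    have : ∀ y ∈ L, (d : ℝ) • y ∈
        (lattB b).map T.toLinearEquiv.toLinearMap.toAddMonoidHom := by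
      intro y hy
      induction hy using Submodule.span_induction with
      | mem z hz =>
        obtain ⟨j, rfl⟩ := hz
        exact hdbj j
      | zero => simpa using (AddSubgroup.zero_mem _)
      | add y z _ _ hy hz => rw [smul_add]; exact AddSubgroup.add_mem _ hy hz
      | smul a y _ hy =>
        rw [smul_comm]
        exact AddSubgroup.zsmul_mem _ hy a
    have h := this x hx'
    have hcast : d • x = (d : ℝ) • x := by
      rw [Nat.cast_smul_eq_nsmul]
    rw [hcast]
    exact h
  -- now finiteness of the quotient
  set Γ : AddSubgroup (En n) := lattB b with hΓ
  set H : AddSubgroup (En n) := Γ ⊓ Γ.map T.toLinearEquiv.toLinearMap.toAddMonoidHom with hH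
  set H' : AddSubgroup Γ := H.addSubgroupOf Γ with hH'
  have : Finite (Γ ⧸ H') := by
    haveI hMF : Module.Finite ℤ L := Module.Finite.iff_fg.mpr (Submodule.fg_span (Set.finite_range ⇑b))
    haveI hFG : AddGroup.FG Γ := Module.Finite.iff_addGroup_fg.mp hMF
    haveI : AddGroup.FG (Γ ⧸ H') := inferInstance
    refine AddCommGroup.finite_of_fg_torsion _ (fun x => ?_)
    obtain ⟨y, rfl⟩ := QuotientAddGroup.mk'_surjective H' x
    refine isOfFinAddOrder_iff_nsmul_eq_zero.mpr ⟨d, hdpos, ?_⟩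
    rw [← map_nsmul]
    rw [QuotientAddGroup.mk'_apply, QuotientAddGroup.eq_zero_iff]
    rw [hH', AddSubgroup.mem_addSubgroupOf]
    exact hNsmul (y : En n) y.2
  haveI := this
  unfold CI
  show H'.index ≠ 0
  exact AddSubgroup.index_ne_zero_of_finite
end
end

section
/- Let Γ and Γ' be commensurate lattices in ℝⁿ (Γ ∩ Γ' has finite index in both). Then for any orthogonal T, T is a coincidence isometry of Γ if and only if T is a coincidence isometry of Γ'. -/
noncomputable section

lemma relindex_map_equiv {A B : Type*} [AddCommGroup A] [AddCommGroup B]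
    (e : A ≃+ B) (H K : AddSubgroup A) :
    (H.map e.toAddMonoidHom).relIndex (K.map e.toAddMonoidHom) = H.relIndex K := by
  rw [← AddSubgroup.relIndex_comap,
    AddSubgroup.comap_map_eq_self_of_injective e.injective]

lemma key {A : Type*} [AddCommGroup A] (e : A ≃+ A) (Γ Γ' : AddSubgroup A)
    (h1 : (Γ ⊓ Γ').relIndex Γ ≠ 0) (h2 : (Γ ⊓ Γ').relIndex Γ' ≠ 0)
    (hC : (Γ ⊓ Γ.map e.toAddMonoidHom).relIndex Γ ≠ 0) :
    (Γ' ⊓ Γ'.map e.toAddMonoidHom).relIndex Γ' ≠ 0 := by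
  set f := e.toAddMonoidHom
  set Δ := Γ ⊓ Γ' with hΔ
  -- TΓ has finite relIndex in Γ
  rw [AddSubgroup.inf_relIndex_left] at hC
  -- TΔ has finite relIndex in TΓ
  have hTΔTΓ : (Δ.map f).relIndex (Γ.map f) ≠ 0 := by
    rw [relindex_map_equiv]; exact h1
  have hTΔΓ : (Δ.map f).relIndex Γ ≠ 0 :=
    AddSubgroup.relIndex_ne_zero_trans hTΔTΓ hC
  have hinf : (Δ ⊓ Δ.map f).relIndex Γ ≠ 0 :=
    AddSubgroup.relIndex_inf_ne_zero h1 hTΔΓ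
  have hΔΓ : Δ ≤ Γ := inf_le_left
  have hΔinf : (Δ ⊓ Δ.map f).relIndex Δ ≠ 0 := by
    intro h0
    apply hinf
    rw [← AddSubgroup.relIndex_mul_relIndex (Δ ⊓ Δ.map f) Δ Γ inf_le_left hΔΓ, h0, zero_mul]
  rw [AddSubgroup.inf_relIndex_left] at hΔinf
  have hTΔΓ' : (Δ.map f).relIndex Γ' ≠ 0 :=
    AddSubgroup.relIndex_ne_zero_trans hΔinf h2
  have hle : Δ.map f ≤ Γ'.map f := AddSubgroup.map_mono inf_le_right
  have hdvd : (Γ'.map f).relIndex Γ' ∣ (Δ.map f).relIndex Γ' :=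
    AddSubgroup.relIndex_dvd_of_le_left Γ' hle
  rw [AddSubgroup.inf_relIndex_left]
  intro h0
  exact hTΔΓ' (Nat.eq_zero_of_zero_dvd (h0 ▸ hdvd))

theorem stmt_7 {n : ℕ} (b b' : Module.Basis (Fin n) ℝ (En n)) (T : En n ≃ₗᵢ[ℝ] En n)
    (h1 : (lattB b ⊓ lattB b').relIndex (lattB b) ≠ 0)
    (h2 : (lattB b ⊓ lattB b').relIndex (lattB b') ≠ 0) :
    CI (lattB b) T ↔ CI (lattB b') T := by
  have he : T.toLinearEquiv.toLinearMap.toAddMonoidHom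
      = T.toLinearEquiv.toAddEquiv.toAddMonoidHom := rfl
  unfold CI
  rw [he]
  constructor
  · exact key T.toLinearEquiv.toAddEquiv (lattB b) (lattB b') h1 h2
  · have h1' : (lattB b' ⊓ lattB b).relIndex (lattB b') ≠ 0 := by rwa [inf_comm]
    have h2' : (lattB b' ⊓ lattB b).relIndex (lattB b) ≠ 0 := by rwa [inf_comm]
    exact key T.toLinearEquiv.toAddEquiv (lattB b') (lattB b) h1' h2'
end
end
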